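/- arXiv:1607.04604 — 2 statements merged into one kernel-verified Lean document; each statement's English description precedes it below -/
import Mathlib

section
/- For every positive natural number n, the double sum over k from 0 to floor(log2 n) and i from 0 to 2^k - 1 of floor((n+i)/2^(k+1)) equals (n/2)*(floor(log2 n) + 1) - sum over k from 0 to floor(log2 n) of 2^k * Zigzag(n/2^(k+1)). -/
def Zigzag (x : ℚ) : ℚ := min (x - ⌊x⌋) (⌈x⌉ - x)

lemma nat_inner_sum (n k : ℕ) :
    2 * ∑ i ∈ Finset.range (2 ^ k), (n + i) / 2 ^ (k + 1)
      = n - min (n % 2 ^ (k + 1)) (2 ^ (k + 1) - n % 2 ^ (k + 1)) := by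
  set m := 2 ^ (k + 1) with hm
  have hm2 : m = 2 * 2 ^ k := by rw [hm, pow_succ]; ring
  have hm0 : 0 < m := by positivity
  set r := n % m with hr
  have hrm : r < m := Nat.mod_lt _ hm0
  have hrn : r ≤ n := Nat.mod_le _ _
  have hdm : m * (n / m) + r = n := Nat.div_add_mod n m
  have hq : m * (n / m) = n - r := Nat.eq_sub_of_add_eq hdm
  have key : ∀ i ∈ Finset.range (2 ^ k),
      (n + i) / m = (if m ≤ r + i then 1 else 0) + n / m := by
    intro i hi
    have hi2 : i < 2 ^ k := Finset.mem_range.mp hi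
    have hni : n + i = (r + i) + (n / m) * m := by
      rw [mul_comm] at hdm; omega
    rw [hni, Nat.add_mul_div_right _ _ hm0]
    congr 1
    by_cases h : m ≤ r + i
    · rw [if_pos h]
      rw [Nat.div_eq_sub_div hm0 h, Nat.div_eq_of_lt (by omega)]
    · rw [if_neg h]
      exact Nat.div_eq_of_lt (by omega)
  rw [Finset.sum_congr rfl key, Finset.sum_add_distrib, Finset.sum_const,
    Finset.card_range, smul_eq_mul]
  have hind : ∑ i ∈ Finset.range (2 ^ k), (if m ≤ r + i then 1 else 0)
      = 2 ^ k - (m - r) := by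
    rw [Finset.sum_ite, Finset.sum_const, Finset.sum_const, smul_eq_mul, smul_eq_mul,
      mul_one, mul_zero, add_zero]
    have hfil : (Finset.range (2 ^ k)).filter (fun i => m ≤ r + i)
        = Finset.Ico (m - r) (2 ^ k) := by
      ext a
      simp only [Finset.mem_filter, Finset.mem_range, Finset.mem_Ico]
      omega
    rw [hfil, Nat.card_Ico]
  rw [hind, Nat.mul_add]
  have h3 : 2 * (2 ^ k * (n / m)) = n - r := by
    rw [← mul_assoc, ← hm2, hq]
  rw [h3]
  omega

lemma zigzag_div (n k : ℕ) :
    Zigzag ((n : ℚ) / 2 ^ (k + 1))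
      = ((min (n % 2 ^ (k + 1)) (2 ^ (k + 1) - n % 2 ^ (k + 1)) : ℕ) : ℚ)
          / 2 ^ (k + 1) := by
  set m := 2 ^ (k + 1) with hm
  have hm0 : 0 < m := by positivity
  have hmQ : (0 : ℚ) < (m : ℚ) := by exact_mod_cast hm0
  set r := n % m with hr
  have hrm : r < m := Nat.mod_lt _ hm0
  have hdm : m * (n / m) + r = n := Nat.div_add_mod n m
  set q := n / m with hqdef
  have hn' : (n : ℚ) = (m : ℚ) * (q : ℚ) + (r : ℚ) := by exact_mod_cast hdm.symm
  have hx : (n : ℚ) / (m : ℚ) = (q : ℚ) + (r : ℚ) / (m : ℚ) := by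
    rw [hn']; field_simp
  have hmcast : ((2 : ℚ) ^ (k + 1)) = (m : ℚ) := by rw [hm]; push_cast; ring
  rw [hmcast, hx]
  by_cases h0 : r = 0
  · have : (q : ℚ) + (r : ℚ) / (m : ℚ) = ((q : ℤ) : ℚ) := by
      rw [h0]; push_cast; ring
    rw [this]
    simp [Zigzag, h0]
  · have hr0 : (0 : ℚ) < (r : ℚ) := by
      exact_mod_cast Nat.pos_of_ne_zero h0
    have hfrac1 : (r : ℚ) / (m : ℚ) < 1 := by
      rw [div_lt_one hmQ]; exact_mod_cast hrm
    have hfrac0 : (0 : ℚ) < (r : ℚ) / (m : ℚ) := by positivity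
    have hfloor : ⌊(q : ℚ) + (r : ℚ) / (m : ℚ)⌋ = (q : ℤ) := by
      rw [Int.floor_eq_iff]
      push_cast
      constructor <;> linarith
    have hceil : ⌈(q : ℚ) + (r : ℚ) / (m : ℚ)⌉ = (q : ℤ) + 1 := by
      rw [Int.ceil_eq_iff]
      push_cast
      constructor <;> linarith
    rw [Zigzag, hfloor, hceil]
    have h1 : (q : ℚ) + (r : ℚ) / (m : ℚ) - ((q : ℤ) : ℚ) = (r : ℚ) / (m : ℚ) := by
      push_cast; ring
    have h2 : (((q : ℤ) + 1 : ℤ) : ℚ) - ((q : ℚ) + (r : ℚ) / (m : ℚ))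
        = ((m - r : ℕ) : ℚ) / (m : ℚ) := by
      rw [Nat.cast_sub hrm.le]
      push_cast
      field_simp
      ring
    rw [h1, h2, min_div_div_right hmQ.le, Nat.cast_min]

lemma inner_q (n k : ℕ) :
    ((∑ i ∈ Finset.range (2 ^ k), ⌊((n : ℚ) + i) / 2 ^ (k + 1)⌋ : ℤ) : ℚ)
      = (n : ℚ) / 2 - 2 ^ k * Zigzag ((n : ℚ) / 2 ^ (k + 1)) := by
  have h1 : ∀ i : ℕ, ⌊((n : ℚ) + i) / 2 ^ (k + 1)⌋ = (((n + i) / 2 ^ (k + 1) : ℕ) : ℤ) := by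
    intro i
    rw [show ((n : ℚ) + i) = (((n + i : ℕ) : ℤ) : ℚ) by push_cast; ring,
        show ((2 : ℚ) ^ (k + 1)) = (((2 ^ (k + 1) : ℕ)) : ℚ) by push_cast; ring,
        Rat.floor_intCast_div_natCast]
    exact (Int.natCast_ediv _ _)
  simp_rw [h1]
  rw [zigzag_div]
  have h2 := nat_inner_sum n k
  have hmin : min (n % 2 ^ (k + 1)) (2 ^ (k + 1) - n % 2 ^ (k + 1)) ≤ n :=
    le_trans (min_le_left _ _) (Nat.mod_le _ _)
  have h2' : (2 : ℚ) * ((∑ i ∈ Finset.range (2 ^ k), (n + i) / 2 ^ (k + 1) : ℕ) : ℚ)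
      = (n : ℚ) - ((min (n % 2 ^ (k + 1)) (2 ^ (k + 1) - n % 2 ^ (k + 1)) : ℕ) : ℚ) := by
    have h := congrArg (Nat.cast : ℕ → ℚ) h2
    rwa [Nat.cast_mul, Nat.cast_sub hmin, Nat.cast_ofNat] at h
  have hpow2 : ((2 : ℚ)) ^ (k + 1) = 2 * 2 ^ k := by rw [pow_succ]; ring
  rw [hpow2]
  have hne : ((2 : ℚ)) ^ k ≠ 0 := by positivity
  have key : (2 : ℚ) ^ k
        * (((min (n % 2 ^ (k + 1)) (2 ^ (k + 1) - n % 2 ^ (k + 1)) : ℕ) : ℚ) / (2 * 2 ^ k))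
      = ((min (n % 2 ^ (k + 1)) (2 ^ (k + 1) - n % 2 ^ (k + 1)) : ℕ) : ℚ) / 2 := by
    field_simp
  rw [key, ← Nat.cast_sum, Int.cast_natCast]
  linarith

theorem double_sum_floor_eq (n : ℕ) (hn : 0 < n) :
    ((∑ k ∈ Finset.range (Nat.log 2 n + 1), ∑ i ∈ Finset.range (2 ^ k),
        ⌊((n : ℚ) + i) / 2 ^ (k + 1)⌋ : ℤ) : ℚ)
      = (n : ℚ) / 2 * (Nat.log 2 n + 1)
        - ∑ k ∈ Finset.range (Nat.log 2 n + 1),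
            2 ^ k * Zigzag ((n : ℚ) / 2 ^ (k + 1)) := by
  rw [Int.cast_sum]
  rw [Finset.sum_congr rfl (fun k _ => inner_q n k)]
  rw [Finset.sum_sub_distrib, Finset.sum_const, Finset.card_range, nsmul_eq_mul]
  push_cast
  ring
end

section
/- Define W(n) = n*ceil(log2 n) - 2^(ceil(log2 n)) + 1 and let B : N -> N satisfy B(1) = 0 and B(n) = floor(n/2) + B(floor(n/2)) + B(ceil(n/2)) for n >= 2. Define F(n) = sum over k from 1 to floor(log2 n) of 2^k * Zigzag(n/2^k). Then for every positive natural number n, 2*B(n) - W(n) = n - 1 - F(n), as an equality of rationals. -/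
lemma zig_frac (q : ℤ) (x : ℚ) (h0 : 0 ≤ x) (h1 : x < 1) :
    Zigzag ((q : ℚ) + x) = min x (1 - x) := by
  unfold Zigzag
  rcases eq_or_lt_of_le h0 with h | h
  · subst h; simp
  · have hf : ⌊(q : ℚ) + x⌋ = q := by
      rw [Int.floor_eq_iff] <;> push_cast <;> constructor <;> linarith
    have hcx : ⌈x⌉ = 1 := by
      rw [Int.ceil_eq_iff] <;> push_cast <;> simp <;> constructor <;> linarith
    have hc : ⌈(q : ℚ) + x⌉ = q + 1 := by
      rw [add_comm, Int.ceil_add_intCast, hcx, add_comm]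
    rw [hf, hc]; push_cast; ring_nf

lemma zig_pow (m k : ℕ) :
    (2:ℚ)^k * Zigzag ((m:ℚ) / 2^k) = (min (m % 2^k) (2^k - m % 2^k) : ℕ) := by
  set r := m % 2^k with hr
  set q := m / 2^k with hq
  have hrk : r < 2^k := Nat.mod_lt _ (by positivity)
  have hm : m = 2^k * q + r := (Nat.div_add_mod m (2^k)).symm
  have hpos : (0:ℚ) < 2^k := by positivity
  have hx : (m:ℚ) / 2^k = (q : ℤ) + (r : ℚ) / 2^k := by
    rw [hm]; push_cast; field_simp
  rw [hx, zig_frac _ _ (by positivity) (by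
    rw [div_lt_one hpos]; exact_mod_cast hrk)]
  push_cast [Nat.cast_min, Nat.cast_sub hrk.le]
  rw [mul_min_of_nonneg _ _ hpos.le]
  congr 1
  · field_simp
  · field_simp


def g (m k : ℕ) : ℕ := min (m % 2^k) (2^k - m % 2^k)

lemma g_one (n : ℕ) : g n 1 = n % 2 := by
  unfold g; omega

lemma g_pow_self (L : ℕ) : g (2^L) L = 0 := by
  unfold g; simp

lemma g_split (n j : ℕ) (hj : 1 ≤ j) :
    g n (j+1) = g (n/2) j + g ((n+1)/2) j := by
  unfold g
  set H := 2^j with hH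
  have hH2 : 2 ≤ H := by
    calc 2 = 2^1 := rfl
    _ ≤ 2^j := Nat.pow_le_pow_right (by norm_num) hj
  have hpow : 2^(j+1) = 2*H := by rw [pow_succ]; ring
  have hHe : H % 2 = 0 := by
    have : (2:ℕ) ∣ H := dvd_pow_self 2 (by omega)
    omega
  rw [hpow]
  rcases Nat.even_or_odd n with ⟨a, ha⟩ | ⟨a, ha⟩
  · -- n = 2a
    subst ha
    have h1 : a + a = 2*a := by ring
    rw [h1]
    have h2 : 2*a % (2*H) = 2*(a % H) := by
      rw [Nat.mul_mod_mul_left]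
    have h3 : (2*a+1)/2 = a := by omega
    have h4 : (2*a)/2 = a := by omega
    rw [h2, h3, h4]
    have := Nat.mod_lt a (show 0 < H by omega)
    omega
  · -- n = 2a+1
    subst ha
    have h3 : (2*a+1)/2 = a := by omega
    have h4 : (2*a+1+1)/2 = a+1 := by omega
    rw [h3, h4]
    -- let r = (2a+1) % (2H); r odd
    have hq := Nat.div_add_mod (2*a+1) (2*H)
    set Q := (2*a+1) / (2*H) with hQ
    set r := (2*a+1) % (2*H) with hr
    have hrlt : r < 2*H := Nat.mod_lt _ (by omega)
    clear hr hQ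
    clear_value Q r
    have h5 : 2*H*Q = 2*(H*Q) := by ring
    have hrodd : r % 2 = 1 := by omega
    have hra : a % H = r / 2 := by
      have h6 : a = r/2 + H * Q := by omega
      rw [h6, Nat.add_mul_mod_self_left]
      exact Nat.mod_eq_of_lt (by omega)
    have hrb : (a+1) % H = (r/2 + 1) % H := by
      have h6 : a + 1 = (r/2 + 1) + H * Q := by omega
      rw [h6, Nat.add_mul_mod_self_left]
    rcases Nat.lt_or_ge (r/2 + 1) H with hc | hc
    · have h9 : (r/2+1) % H = r/2+1 := Nat.mod_eq_of_lt hc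
      rw [hra, hrb, h9]; omega
    · have h7 : r/2 + 1 = H := by omega
      have h8 : (r/2 + 1) % H = 0 := by rw [h7, Nat.mod_self]
      rw [hra, hrb, h8]; omega

lemma sum_Icc_one (f : ℕ → ℕ) (L : ℕ) :
    ∑ k ∈ Finset.Icc 1 L, f k = ∑ i ∈ Finset.range L, f (i+1) := by
  induction L with
  | zero => simp
  | succ L ih => rw [Finset.sum_Icc_succ_top (by omega), ih, Finset.sum_range_succ]

def Fn (n : ℕ) : ℕ := ∑ k ∈ Finset.Icc 1 (Nat.log 2 n), g n k

lemma Fn_rec (n : ℕ) (hn : 2 ≤ n) : Fn n = n % 2 + Fn (n/2) + Fn ((n+1)/2) := by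
  set L := Nat.log 2 n with hL
  have hL1 : 1 ≤ L := Nat.log_pos (by norm_num) hn
  have hpowle : 2^L ≤ n := Nat.pow_log_le_self 2 (by omega)
  have hltpow : n < 2^(L+1) := Nat.lt_pow_succ_log_self (by norm_num) n
  have hpow2 : 2^L = 2*2^(L-1) := by
    rw [← pow_succ']
    congr 1
    omega
  have hpow3 : 2^(L+1) = 2*2^L := by rw [pow_succ]; ring
  set a := n/2 with ha
  set b := (n+1)/2 with hb
  have hLa : Nat.log 2 a = L - 1 := by rw [ha, Nat.log_div_base, hL]
  have hble : b ≤ 2^L := by omega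
  have hbge : 2^(L-1) ≤ b := by omega
  have hLb1 : L - 1 ≤ Nat.log 2 b := by
    calc L - 1 = Nat.log 2 (2^(L-1)) := (Nat.log_pow (by norm_num) _).symm
    _ ≤ Nat.log 2 b := Nat.log_mono_right hbge
  have hLb2 : Nat.log 2 b ≤ L := by
    calc Nat.log 2 b ≤ Nat.log 2 (2^L) := Nat.log_mono_right hble
    _ = L := Nat.log_pow (by norm_num) _
  -- main sum
  have key : Fn n = g n 1 + (Fn a + ∑ i ∈ Finset.range (L-1), g b (i+1)) := by
    rw [Fn, ← hL, sum_Icc_one]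
    have hLs : L = (L-1) + 1 := by omega
    rw [hLs, Finset.sum_range_succ']
    have step : ∀ i ∈ Finset.range (L-1), g n (i+1+1) = g a (i+1) + g b (i+1) := by
      intro i _
      exact g_split n (i+1) (by omega)
    rw [Finset.sum_congr rfl step, Finset.sum_add_distrib]
    rw [Fn, hLa, sum_Icc_one, show L - 1 + 1 - 1 = L - 1 by omega]
    ring
  have hFb : Fn b = ∑ i ∈ Finset.range (L-1), g b (i+1) := by
    rcases Nat.lt_or_ge (Nat.log 2 b) L with hc | hc
    · rw [Fn, show Nat.log 2 b = L - 1 by omega, sum_Icc_one]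
    · have hLbL : Nat.log 2 b = L := by omega
      have hb2 : b = 2^L := by
        have := Nat.pow_log_le_self 2 (show b ≠ 0 by omega)
        rw [hLbL] at this
        omega
      rw [Fn, hLbL, show L = (L-1)+1 by omega, Finset.sum_Icc_succ_top (by omega),
        sum_Icc_one, show (L-1)+1 = L by omega]
      have : g b L = 0 := by rw [hb2]; exact g_pow_self L
      rw [this, add_zero]
  rw [key, hFb, g_one]
  ring


lemma ceil_half (n : ℕ) : (⌈(n : ℚ) / 2⌉).toNat = (n+1)/2 := by
  rcases Nat.even_or_odd n with ⟨m, hm⟩ | ⟨m, hm⟩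
  · subst hm
    have h1 : ((m + m : ℕ) : ℚ) / 2 = (m : ℚ) := by push_cast; ring
    rw [h1]
    rw [show ((m : ℚ)) = ((m : ℤ) : ℚ) by push_cast; ring, Int.ceil_intCast]
    simp
    omega
  · subst hm
    have h1 : ((2*m + 1 : ℕ) : ℚ) / 2 = ((m : ℤ) : ℚ) + 1/2 := by push_cast; ring
    rw [h1, add_comm, Int.ceil_add_intCast]
    have h2 : ⌈(1/2 : ℚ)⌉ = 1 := by norm_num [Int.ceil_eq_iff]
    rw [h2]
    omega

lemma W_formula_rec (n : ℕ) (hn : 2 ≤ n) :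
    (n : ℚ) * Nat.clog 2 n - 2 ^ Nat.clog 2 n + 1 =
      (((n/2 : ℕ) : ℚ) * Nat.clog 2 (n/2) - 2 ^ Nat.clog 2 (n/2) + 1)
      + ((((n+1)/2 : ℕ) : ℚ) * Nat.clog 2 ((n+1)/2) - 2 ^ Nat.clog 2 ((n+1)/2) + 1)
      + ((n : ℚ) - 1) := by
  set c := Nat.clog 2 n with hc
  have hc1 : 1 ≤ c := Nat.clog_pos (by norm_num) hn
  have hcb : Nat.clog 2 ((n+1)/2) = c - 1 := by
    have := Nat.clog_of_two_le (show 1 < 2 by norm_num) hn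
    rw [show (n + 2 - 1)/2 = (n+1)/2 by omega] at this
    omega
  have hnle : n ≤ 2^c := Nat.le_pow_clog (by norm_num) n
  have hngt : 2^(c-1) < n := by
    have := Nat.pow_pred_clog_lt_self (show 1 < 2 by norm_num) (show 1 < n by omega)
    simpa using this
  have hab : n/2 + (n+1)/2 = n := by omega
  rcases eq_or_lt_of_le hc1 with h1 | h1
  · -- c = 1, so n = 2
    have hn2 : n = 2 := by
      have : 2^c = 2 := by rw [← h1]; norm_num
      omega
    subst hn2
    norm_num [hcb, ← h1]
  · -- c ≥ 2
    have hc2 : 2 ≤ c := h1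
    have hpow1 : 2^c = 2*2^(c-1) := by
      rw [← pow_succ']; congr 1; omega
    have hpow2 : 2^(c-1) = 2*2^(c-2) := by
      rw [← pow_succ']; congr 1; omega
    have hage : 2^(c-2) ≤ n/2 := by omega
    have hale : n/2 ≤ 2^(c-1) := by omega
    have hcale : Nat.clog 2 (n/2) ≤ c - 1 := by
      calc Nat.clog 2 (n/2) ≤ Nat.clog 2 (2^(c-1)) := Nat.clog_mono_right _ hale
      _ = c - 1 := Nat.clog_pow _ _ (by norm_num)
    rcases eq_or_lt_of_le hage with he | he
    · -- n/2 = 2^(c-2), clog = c-2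
      have hca : Nat.clog 2 (n/2) = c - 2 := by
        rw [← he, Nat.clog_pow _ _ (by norm_num)]
      obtain ⟨d, hd⟩ : ∃ d, c = d + 2 := ⟨c - 2, by omega⟩
      rw [hca, hcb, hd]
      rw [show d + 2 - 1 = d + 1 by omega, show d + 2 - 2 = d by omega]
      have habq : ((n/2 : ℕ) : ℚ) + (((n+1)/2 : ℕ) : ℚ) = (n : ℚ) := by
        exact_mod_cast congrArg (Nat.cast : ℕ → ℚ) hab
      have haq' : n/2 = 2^d := by
        rw [← he]; congr 1; omega
      have haq : ((n/2 : ℕ) : ℚ) = 2^d := by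
        rw [haq']; push_cast; ring
      push_cast
      rw [haq] at habq ⊢
      linear_combination (-((d:ℚ)+1)) * habq
    · -- clog (n/2) = c-1
      have hca : Nat.clog 2 (n/2) = c - 1 := by
        have := (Nat.lt_clog_iff_pow_lt (show 1 < 2 by norm_num)).mpr he
        omega
      obtain ⟨d, hd⟩ : ∃ d, c = d + 1 := ⟨c - 1, by omega⟩
      rw [hca, hcb, hd, show d + 1 - 1 = d by omega]
      have habq : ((n/2 : ℕ) : ℚ) + (((n+1)/2 : ℕ) : ℚ) = (n : ℚ) := by
        exact_mod_cast congrArg (Nat.cast : ℕ → ℚ) hab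
      push_cast
      linear_combination (-(d:ℚ)) * habq


theorem twoB_sub_W (B : ℕ → ℕ) (hB1 : B 1 = 0)
    (hB : ∀ n, 2 ≤ n → B n = n / 2 + B (n / 2) + B ((⌈(n : ℚ) / 2⌉).toNat))
    (W : ℕ → ℚ) (hW : ∀ n, W n = (n : ℚ) * Nat.clog 2 n - 2 ^ Nat.clog 2 n + 1)
    (F : ℕ → ℚ)
    (hF : ∀ n, F n = ∑ k ∈ Finset.Icc 1 (Nat.log 2 n),
        (2 : ℚ) ^ k * Zigzag ((n : ℚ) / 2 ^ k)) :
    ∀ n : ℕ, 0 < n → 2 * (B n : ℚ) - W n = (n : ℚ) - 1 - F n := by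
  have hFQ : ∀ m : ℕ, F m = (Fn m : ℚ) := by
    intro m
    rw [hF, Fn]
    push_cast
    refine Finset.sum_congr rfl ?_
    intro k _
    rw [zig_pow]
    push_cast [g]
    ring
  intro n
  induction n using Nat.strong_induction_on with
  | _ n ih =>
    intro hn
    rcases Nat.lt_or_ge n 2 with h2 | h2
    · -- n = 1
      have h1 : n = 1 := by omega
      subst h1
      rw [hB1, hW, hFQ]
      have : Fn 1 = 0 := by
        rw [Fn]
        simp
      rw [this]
      norm_num
    · -- n ≥ 2
      set a := n/2 with ha
      set b := (n+1)/2 with hb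
      have hBa := ih a (by omega) (by omega)
      have hBb := ih b (by omega) (by omega)
      have hBn : B n = a + B a + B b := by
        rw [hB n h2, ceil_half, ← ha, ← hb]
      have hWn : W n = W a + W b + ((n:ℚ) - 1) := by
        rw [hW n, hW a, hW b]
        have := W_formula_rec n h2
        rw [← ha, ← hb] at this
        linarith [this]
      have hFn : F n = ((n % 2 : ℕ) : ℚ) + F a + F b := by
        rw [hFQ, hFQ, hFQ, Fn_rec n h2, ← ha, ← hb]
        push_cast
        ring
      have hmod : ((n % 2 : ℕ) : ℚ) = (n : ℚ) - 2 * (a : ℚ) := by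
        have : n % 2 + 2 * a = n := by omega
        have := congrArg (Nat.cast : ℕ → ℚ) this
        push_cast at this
        linarith
      have hBnq : (B n : ℚ) = (a : ℚ) + (B a : ℚ) + (B b : ℚ) := by
        exact_mod_cast congrArg (Nat.cast : ℕ → ℚ) hBn
      have habq : (a : ℚ) + (b : ℚ) = (n : ℚ) := by
        have : a + b = n := by omega
        exact_mod_cast congrArg (Nat.cast : ℕ → ℚ) this
      rw [hBnq, hWn, hFn, hmod]
      linarith
end
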